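/- Let k ≥ 1. If G is θ_{k+1}-immersion free, then the ∞-edge-admissibility of G is at most 2k−1, i.e., δ_e^∞(G) ≤ 2k−1. Equivalently, if every pair of distinct vertices of G is separated by an edge cut of size at most k, then G has no (2k,∞)-edge-hideout. -/

import Mathlib

set_option maxHeartbeats 1000000
set_option linter.unusedSectionVars false

/-- A walk in a multigraph given by its endpoint function `ends`:
`IsWalk ends u w l` means `l` is the list of edges of a walk from `u` to `w`. -/
inductive IsWalk {V E : Type*} (ends : E → Sym2 V) : V → V → List E → Prop
  | nil (v : V) : IsWalk ends v v []
  | cons {u v w : V} {e : E} {l : List E} :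
      ends e = s(u, v) → IsWalk ends v w l → IsWalk ends u w (e :: l)

/-- `EdgeSep ends s x S A` : the edge set `A` meets every walk of length at most `s`
from `x` to a vertex of `S`. -/
def EdgeSep {V E : Type*} (ends : E → Sym2 V) (s : ℕ∞) (x : V) (S : Set V) (A : Set E) : Prop :=
  ∀ y ∈ S, ∀ l : List E, IsWalk ends x y l → (l.length : ℕ∞) ≤ s → ∃ e ∈ l, e ∈ A

/-- A `(k,s)`-edge-hide-out: every edge set separating a vertex `x ∈ R` from `R \ {x}`
(at distance `s`) has at least `k` edges. -/
def IsHideout {V E : Type*} (ends : E → Sym2 V) (s : ℕ∞) (k : ℕ) (R : Set V) : Prop :=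
  ∀ x ∈ R, ∀ A : Set E, EdgeSep ends s x (R \ {x}) A → k ≤ A.ncard

/-- `G` admits a layout of `s`-edge-degeneracy at most `k`. -/
def LayoutWidthLE {V E : Type*} (ends : E → Sym2 V) (s : ℕ∞) (k : ℕ) : Prop :=
  ∃ (n : ℕ) (L : Fin n ≃ V), ∀ i : Fin n,
    ∃ A : Set E, A.ncard ≤ k ∧ EdgeSep ends s (L i) {v | ∃ j, j < i ∧ L j = v} A

/-- The `s`-edge-degeneracy `δ_e^s(G)`. -/
noncomputable def edgeDeg {V E : Type*} (ends : E → Sym2 V) (s : ℕ∞) : ℕ :=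
  sInf {k | LayoutWidthLE ends s k}

/-- The edge-degree of a vertex (parallel edges counted with multiplicity). -/
noncomputable def degE {V E : Type*} (ends : E → Sym2 V) (v : V) : ℕ :=
  {e : E | v ∈ ends e}.ncard
/-- The multigraph `θ_k`: two vertices joined by `k` parallel edges. -/
def thetaEnds (k : ℕ) : Fin k → Sym2 (Fin 2) := fun _ => s(0, 1)

/-- `H` is an immersion of `G`: an injection of the vertices of `H` into those of `G`
together with pairwise edge-disjoint trails of `G` realizing the edges of `H`. -/
def Immersion {V' E' V E : Type*} (ends' : E' → Sym2 V') (ends : E → Sym2 V) : Prop :=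
  ∃ (φ : V' ↪ V) (P : E' → List E),
    (∀ e : E', ∃ u v : V', ends' e = s(u, v) ∧ IsWalk ends (φ u) (φ v) (P e) ∧ (P e).Nodup) ∧
    ∀ e f : E', e ≠ f → ∀ x ∈ P e, x ∉ P f

namespace P17
open Classical

variable {V E : Type*}

/-- edge boundary of a vertex set -/
def bd (ends : E → Sym2 V) (X : Set V) : Set E :=
  {e | ∃ u v, ends e = s(u, v) ∧ u ∈ X ∧ v ∉ X}

lemma mem_bd_iff {ends : E → Sym2 V} {X : Set V} {e : E} {a b : V}
    (h : ends e = s(a, b)) :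
    e ∈ bd ends X ↔ ((a ∈ X ∧ b ∉ X) ∨ (b ∈ X ∧ a ∉ X)) := by
  constructor
  · rintro ⟨u, v, huv, hu, hv⟩
    rw [h, Sym2.eq_iff] at huv
    rcases huv with ⟨rfl, rfl⟩ | ⟨rfl, rfl⟩
    · exact Or.inl ⟨hu, hv⟩
    · exact Or.inr ⟨hu, hv⟩
  · rintro (⟨ha, hb⟩ | ⟨hb, ha⟩)
    · exact ⟨a, b, h, ha, hb⟩
    · exact ⟨b, a, by rw [h, Sym2.eq_swap], hb, ha⟩

lemma bd_compl (ends : E → Sym2 V) (X : Set V) : bd ends Xᶜ = bd ends X := by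
  ext e
  constructor
  · rintro ⟨u, v, huv, hu, hv⟩
    exact ⟨v, u, by rw [huv, Sym2.eq_swap], by simpa using hv, by simpa using hu⟩
  · rintro ⟨u, v, huv, hu, hv⟩
    exact ⟨v, u, by rw [huv, Sym2.eq_swap], by simpa using hv, by simpa using hu⟩

lemma walk_crosses {ends : E → Sym2 V} {X : Set V} :
    ∀ {a b : V} {l : List E}, IsWalk ends a b l → a ∈ X → b ∉ X →
      ∃ e ∈ l, e ∈ bd ends X := by
  intro a b l hw
  induction hw with
  | nil v => intro h h'; exact absurd h h'
  | cons he hw ih =>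
    rename_i u v w e l
    intro ha hb
    by_cases hv : v ∈ X
    · obtain ⟨f, hf, hfb⟩ := ih hv hb
      exact ⟨f, List.mem_cons_of_mem _ hf, hfb⟩
    · exact ⟨e, List.mem_cons_self, ⟨u, v, he, ha, hv⟩⟩

lemma isWalk_append {ends : E → Sym2 V} :
    ∀ {a b c : V} {l1 l2 : List E}, IsWalk ends a b l1 → IsWalk ends b c l2 →
      IsWalk ends a c (l1 ++ l2) := by
  intro a b c l1 l2 h1
  induction h1 with
  | nil v => intro h; simpa using h
  | cons he hw ih => intro h2; exact IsWalk.cons he (ih h2)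

/-- vertices reachable from `x` by walks avoiding `A` -/
def Reach (ends : E → Sym2 V) (A : Set E) (x : V) : Set V :=
  {v | ∃ l, IsWalk ends x v l ∧ ∀ e ∈ l, e ∉ A}

lemma self_mem_reach (ends : E → Sym2 V) (A : Set E) (x : V) : x ∈ Reach ends A x :=
  ⟨[], IsWalk.nil x, by simp⟩

lemma bd_reach_subset (ends : E → Sym2 V) (A : Set E) (x : V) :
    bd ends (Reach ends A x) ⊆ A := by
  rintro e ⟨u, v, huv, hu, hv⟩
  by_contra heA
  obtain ⟨l, hl, hlA⟩ := hu
  refine hv ⟨l ++ [e], isWalk_append hl (IsWalk.cons huv (IsWalk.nil v)), ?_⟩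
  intro f hf
  rcases List.mem_append.1 hf with h | h
  · exact hlA f h
  · simp at h; subst h; exact heA

lemma edgeSep_not_reach {ends : E → Sym2 V} {A : Set E} {x y : V}
    (h : EdgeSep ends ⊤ x {y} A) : y ∉ Reach ends A x := by
  rintro ⟨l, hl, hlA⟩
  obtain ⟨e, hel, heA⟩ := h y rfl l hl le_top
  exact hlA e hel heA

lemma ncard_eq_sum [Fintype E] (s : Set E) :
    s.ncard = ∑ e : E, (if e ∈ s then 1 else 0) := by
  classical
  rw [← Finset.card_filter, ← Set.ncard_coe_finset]
  congr 1; ext e; simp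

lemma exists_ends (ends : E → Sym2 V) (e : E) : ∃ a b, ends e = s(a, b) := by
  obtain ⟨⟨a, b⟩, h⟩ := Quot.exists_rep (ends e)
  exact ⟨a, b, h.symm⟩

lemma bd_submod [Fintype E] (ends : E → Sym2 V) (C D : Set V) :
    (bd ends (C ∩ D)).ncard + (bd ends (C ∪ D)).ncard ≤
      (bd ends C).ncard + (bd ends D).ncard := by
  classical
  rw [ncard_eq_sum, ncard_eq_sum, ncard_eq_sum, ncard_eq_sum,
    ← Finset.sum_add_distrib, ← Finset.sum_add_distrib]
  apply Finset.sum_le_sum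
  intro e _
  obtain ⟨a, b, hab⟩ := exists_ends ends e
  by_cases haC : a ∈ C <;> by_cases hbC : b ∈ C <;>
    by_cases haD : a ∈ D <;> by_cases hbD : b ∈ D <;>
    simp [mem_bd_iff hab, Set.mem_inter_iff, Set.mem_union, haC, hbC, haD, hbD]

section MinCut
variable [Finite V] [Finite E] (ends : E → Sym2 V) {k : ℕ}

/-- existence of minimum cuts of size ≤ k between any two distinct vertices -/
lemma cut_exists (Hpair : ∀ x y : V, x ≠ y → ∃ A : Set E, A.ncard ≤ k ∧ EdgeSep ends ⊤ x {y} A)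
    {a b : V} (hab : a ≠ b) :
    ∃ D : Set V, a ∈ D ∧ b ∉ D ∧
      (∀ Z : Set V, a ∈ Z → b ∉ Z → (bd ends D).ncard ≤ (bd ends Z).ncard) ∧
      (bd ends D).ncard ≤ k := by
  obtain ⟨A, hAk, hAsep⟩ := Hpair a b hab
  set R := Reach ends A a with hR
  have haR : a ∈ R := self_mem_reach ends A a
  have hbR : b ∉ R := edgeSep_not_reach hAsep
  have hdR : (bd ends R).ncard ≤ k :=
    le_trans (Set.ncard_le_ncard (bd_reach_subset ends A a) (Set.toFinite A)) hAk
  set F : Set ℕ := {n | ∃ Z : Set V, a ∈ Z ∧ b ∉ Z ∧ (bd ends Z).ncard = n} with hF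
  have hFne : F.Nonempty := ⟨(bd ends R).ncard, R, haR, hbR, rfl⟩
  obtain ⟨D, haD, hbD, hD⟩ := Nat.sInf_mem hFne
  refine ⟨D, haD, hbD, ?_, ?_⟩
  · intro Z haZ hbZ
    rw [hD]
    exact Nat.sInf_le ⟨Z, haZ, hbZ, rfl⟩
  · rw [hD]
    exact le_trans (Nat.sInf_le ⟨R, haR, hbR, rfl⟩) hdR

/-- the key isolation lemma: some vertex of `S` can be cut off from the rest of `S`
by a boundary of at most `k` edges -/
lemma iso (Hpair : ∀ x y : V, x ≠ y → ∃ A : Set E, A.ncard ≤ k ∧ EdgeSep ends ⊤ x {y} A)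
    (S : Set V) :
    ∀ n : ℕ, ∀ C : Set V, (C ∩ S).ncard = n → (C ∩ S).Nonempty →
      (∃ u v : V, u ∈ C ∧ v ∉ C ∧
        ∀ Z : Set V, u ∈ Z → v ∉ Z → (bd ends C).ncard ≤ (bd ends Z).ncard) →
      (bd ends C).ncard ≤ k →
      ∃ x ∈ S, ∃ C2 : Set V, x ∈ C2 ∧ (∀ y ∈ S, y ≠ x → y ∉ C2) ∧
        (bd ends C2).ncard ≤ k := by
  classical
  letI := Fintype.ofFinite E
  intro n
  induction n using Nat.strong_induction_on with
  | _ n IH =>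
  intro C hn hne hinv hCk
  by_cases h1 : (C ∩ S).ncard ≤ 1
  · have : (C ∩ S).ncard = 1 := le_antisymm h1 ((Set.ncard_pos (Set.toFinite _)).2 hne)
    obtain ⟨x, hx⟩ := Set.ncard_eq_one.1 this
    have hxCS : x ∈ C ∩ S := by rw [hx]; rfl
    refine ⟨x, hxCS.2, C, hxCS.1, ?_, hCk⟩
    intro y hyS hyx hyC
    exact hyx (by have : y ∈ C ∩ S := ⟨hyC, hyS⟩; rw [hx] at this; exact this)
  · push_neg at h1
    obtain ⟨x, w, hxCS, hwCS, hxw⟩ := (Set.one_lt_ncard_iff (Set.toFinite _)).1 h1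
    obtain ⟨D, hxD, hwD, hDmin, hDk⟩ := cut_exists ends Hpair hxw
    obtain ⟨u₀, v₀, hu₀, hv₀, hCmin⟩ := hinv
    by_cases hvD : v₀ ∈ D
    · -- use C' = C \ D, containing w
      set C' := C ∩ Dᶜ with hC'
      have hsub : (bd ends C').ncard ≤ (bd ends D).ncard := by
        have h1' : (bd ends C).ncard ≤ (bd ends (C ∪ Dᶜ)).ncard :=
          hCmin _ (Or.inl hu₀) (by simp [hv₀, hvD])
        have h2' := bd_submod ends C Dᶜ
        rw [bd_compl] at h2'
        rw [hC']
        omega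
      have hC'k : (bd ends C').ncard ≤ k := le_trans hsub hDk
      have hwC' : w ∈ C' := ⟨hwCS.1, hwD⟩
      have hxC' : x ∉ C' := fun h => h.2 hxD
      have hinv' : ∃ u v : V, u ∈ C' ∧ v ∉ C' ∧
          ∀ Z : Set V, u ∈ Z → v ∉ Z → (bd ends C').ncard ≤ (bd ends Z).ncard := by
        refine ⟨w, x, hwC', hxC', ?_⟩
        intro Z hwZ hxZ
        have := hDmin Zᶜ hxZ (by simp [hwZ])
        rw [bd_compl] at this
        exact le_trans hsub this
      have hssub : C' ∩ S ⊂ C ∩ S := by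
        constructor
        · intro z hz; exact ⟨hz.1.1, hz.2⟩
        · intro hsup
          exact hxC' (hsup hxCS).1
      exact IH ((C' ∩ S).ncard) (by
          rw [← hn]
          exact Set.ncard_lt_ncard hssub (Set.toFinite _)) C' rfl ⟨w, hwC', hwCS.2⟩ hinv' hC'k
    · -- use C' = C ∩ D, containing x
      set C' := C ∩ D with hC'
      have hsub : (bd ends C').ncard ≤ (bd ends D).ncard := by
        have h1' : (bd ends C).ncard ≤ (bd ends (C ∪ D)).ncard :=
          hCmin _ (Or.inl hu₀) (by simp [hv₀, hvD])
        have h2' := bd_submod ends C D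
        rw [hC']
        omega
      have hC'k : (bd ends C').ncard ≤ k := le_trans hsub hDk
      have hxC' : x ∈ C' := ⟨hxCS.1, hxD⟩
      have hwC' : w ∉ C' := fun h => hwD h.2
      have hinv' : ∃ u v : V, u ∈ C' ∧ v ∉ C' ∧
          ∀ Z : Set V, u ∈ Z → v ∉ Z → (bd ends C').ncard ≤ (bd ends Z).ncard := by
        refine ⟨x, w, hxC', hwC', ?_⟩
        intro Z hxZ hwZ
        exact le_trans hsub (hDmin Z hxZ hwZ)
      have hssub : C' ∩ S ⊂ C ∩ S := by
        constructor
        · intro z hz; exact ⟨hz.1.1, hz.2⟩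
        · intro hsup
          exact hwC' (hsup hwCS).1
      exact IH ((C' ∩ S).ncard) (by
          rw [← hn]
          exact Set.ncard_lt_ncard hssub (Set.toFinite _)) C' rfl ⟨x, hxC', hxCS.2⟩ hinv' hC'k

lemma pick (Hpair : ∀ x y : V, x ≠ y → ∃ A : Set E, A.ncard ≤ k ∧ EdgeSep ends ⊤ x {y} A)
    (S : Set V) (hS : S.Nonempty) :
    ∃ x ∈ S, ∃ A : Set E, A.ncard ≤ k ∧ EdgeSep ends ⊤ x (S \ {x}) A := by
  by_cases hex : ∃ a ∈ S, ∃ b ∈ S, a ≠ b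
  · obtain ⟨a, haS, b, hbS, hab⟩ := hex
    obtain ⟨D, haD, hbD, hDmin, hDk⟩ := cut_exists ends Hpair hab
    obtain ⟨x, hxS, C2, hxC2, hy, hC2k⟩ := iso ends Hpair S ((D ∩ S).ncard) D rfl
      ⟨a, haD, haS⟩ ⟨a, b, haD, hbD, hDmin⟩ hDk
    refine ⟨x, hxS, bd ends C2, hC2k, ?_⟩
    intro y hyD l hl _
    exact walk_crosses hl hxC2 (hy y hyD.1 hyD.2)
  · push_neg at hex
    obtain ⟨x, hxS⟩ := hS
    refine ⟨x, hxS, ∅, by simp, ?_⟩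
    intro y hyD l hl _
    exact absurd (hex x hxS y hyD.1).symm hyD.2

lemma part2 (hk : 1 ≤ k)
    (Hpair : ∀ x y : V, x ≠ y → ∃ A : Set E, A.ncard ≤ k ∧ EdgeSep ends ⊤ x {y} A)
    (S : Set V) (hS : S.Nonempty) : ¬ IsHideout ends ⊤ (2 * k) S := by
  intro hH
  obtain ⟨x, hxS, A, hAk, hAsep⟩ := pick ends Hpair S hS
  have := hH x hxS A hAsep
  omega

lemma edgeSep_mono {ends : E → Sym2 V} {x : V} {T T' : Set V} {A : Set E}
    (hsub : T' ⊆ T) (h : EdgeSep ends ⊤ x T A) : EdgeSep ends ⊤ x T' A :=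
  fun y hy => h y (hsub hy)

lemma isolist (Hpair : ∀ x y : V, x ≠ y → ∃ A : Set E, A.ncard ≤ k ∧ EdgeSep ends ⊤ x {y} A)
    (S : Finset V) :
    ∃ l : List V, l.Nodup ∧ l.toFinset = S ∧
      ∀ (i : ℕ) (h : i < l.length), ∃ A : Set E, A.ncard ≤ k ∧
        EdgeSep ends ⊤ (l.get ⟨i, h⟩)
          {v | ∃ (j : ℕ) (hj : j < l.length), j < i ∧ l.get ⟨j, hj⟩ = v} A := by
  classical
  obtain ⟨m, hc⟩ : ∃ m, S.card = m := ⟨_, rfl⟩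
  induction m generalizing S with
  | zero =>
    refine ⟨[], by simp, by simpa using (Finset.card_eq_zero.1 hc).symm, ?_⟩
    intro i h; simp at h
  | succ n IH =>
    have hSne : (S : Set V).Nonempty := by
      rw [Finset.coe_nonempty, ← Finset.card_pos, hc]; omega
    obtain ⟨x, hxS, A, hAk, hsep⟩ := pick ends Hpair (S : Set V) hSne
    obtain ⟨l', hnd', htf', hprop'⟩ := IH (S.erase x)
      (by rw [Finset.card_erase_of_mem hxS]; omega)
    have hxl' : x ∉ l' := by
      intro hx
      have : x ∈ S.erase x := htf' ▸ List.mem_toFinset.2 hx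
      simp at this
    refine ⟨l' ++ [x], ?_, ?_, ?_⟩
    · rw [List.nodup_append]
      exact ⟨hnd', List.nodup_singleton x, by
        intro a ha b hb hab
        simp at hb; rw [hab, hb] at ha; exact hxl' ha⟩
    · rw [List.toFinset_append, htf']
      simp only [List.toFinset_cons, List.toFinset_nil, insert_empty_eq]
      rw [Finset.union_comm]
      ext a
      simp only [Finset.mem_union, Finset.mem_singleton, Finset.mem_erase]
      constructor
      · rintro (rfl | ⟨_, ha⟩) <;> [exact hxS; exact ha]
      · intro ha
        by_cases hax : a = x
        · exact Or.inl hax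
        · exact Or.inr ⟨hax, ha⟩
    · intro i h
      rcases lt_or_ge i l'.length with hi | hi
      · obtain ⟨B, hBk, hBsep⟩ := hprop' i hi
        refine ⟨B, hBk, ?_⟩
        have hget : (l' ++ [x]).get ⟨i, h⟩ = l'.get ⟨i, hi⟩ := by
          simp only [List.get_eq_getElem]
          exact List.getElem_append_left hi
        rw [hget]
        refine edgeSep_mono ?_ hBsep
        rintro v ⟨j, hj, hji, hv⟩
        have hjl' : j < l'.length := lt_trans hji hi
        refine ⟨j, hjl', hji, ?_⟩
        rw [← hv]
        simp only [List.get_eq_getElem]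
        exact (List.getElem_append_left hjl').symm
      · have hieq : i = l'.length := by
          simp only [List.length_append, List.length_singleton] at h; omega
        have hget : (l' ++ [x]).get ⟨i, h⟩ = x := by
          subst hieq; simp
        refine ⟨A, hAk, ?_⟩
        rw [hget]
        refine edgeSep_mono ?_ hsep
        rintro v ⟨j, hj, hji, hv⟩
        have hjl' : j < l'.length := by omega
        have : v ∈ l' := by
          rw [← hv]
          have : (l' ++ [x]).get ⟨j, hj⟩ = l'.get ⟨j, hjl'⟩ := by
            simp only [List.get_eq_getElem]
            exact List.getElem_append_left hjl'
          rw [this]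
          simp only [List.get_eq_getElem]
          exact List.getElem_mem hjl'
        have hv' : v ∈ S.erase x := htf' ▸ List.mem_toFinset.2 this
        simp only [Finset.mem_erase] at hv'
        exact ⟨hv'.2, hv'.1⟩

lemma layout (Hpair : ∀ x y : V, x ≠ y → ∃ A : Set E, A.ncard ≤ k ∧ EdgeSep ends ⊤ x {y} A) :
    LayoutWidthLE ends ⊤ k := by
  classical
  letI := Fintype.ofFinite V
  obtain ⟨l, hnd, htf, hprop⟩ := isolist ends Hpair (Finset.univ : Finset V)
  have hinj : Function.Injective l.get := List.nodup_iff_injective_get.1 hnd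
  have hsurj : Function.Surjective l.get := by
    intro v
    have : v ∈ l := List.mem_toFinset.1 (htf ▸ Finset.mem_univ v)
    obtain ⟨i, hi⟩ := List.mem_iff_get.1 this
    exact ⟨i, hi⟩
  refine ⟨l.length, Equiv.ofBijective l.get ⟨hinj, hsurj⟩, ?_⟩
  intro i
  obtain ⟨A, hAk, hAsep⟩ := hprop i.val i.isLt
  refine ⟨A, hAk, ?_⟩
  have : (Equiv.ofBijective l.get ⟨hinj, hsurj⟩) i = l.get i := rfl
  rw [this]
  refine edgeSep_mono ?_ (by convert hAsep using 2)
  rintro v ⟨j, hji, hv⟩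
  exact ⟨j.val, j.isLt, hji, hv⟩

end MinCut

section Flow
variable (o₁ o₂ : E → V)

/-- tail of edge `e` traversed with orientation `b` -/
def tl (b : Bool) (e : E) : V := if b then o₁ e else o₂ e
/-- head of edge `e` traversed with orientation `b` -/
def hdd (b : Bool) (e : E) : V := if b then o₂ e else o₁ e

/-- contribution of an edge state to the excess of vertex `w` -/
noncomputable def contrib (val : Option Bool) (e : E) (w : V) : ℤ :=
  match val with
  | none => 0
  | some b => (if tl o₁ o₂ b e = w then (1 : ℤ) else 0) - (if hdd o₁ o₂ b e = w then 1 else 0)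

variable [Fintype E]

/-- excess (out-degree minus in-degree) of `w` under partial orientation `f` -/
noncomputable def exc (f : E → Option Bool) (w : V) : ℤ := ∑ e : E, contrib o₁ o₂ (f e) e w

variable {ends : E → Sym2 V} (ho : ∀ e, ends e = s(o₁ e, o₂ e)) (hne : ∀ e, o₁ e ≠ o₂ e)

include ho hne

lemma ends_tl_hd (b : Bool) (e : E) : ends e = s(tl o₁ o₂ b e, hdd o₁ o₂ b e) := by
  cases b <;> simp [tl, hdd, ho e, Sym2.eq_swap]

lemma tl_ne_hd (b : Bool) (e : E) : tl o₁ o₂ b e ≠ hdd o₁ o₂ b e := by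
  cases b <;> simp [tl, hdd] <;> [exact (hne e).symm; exact hne e]

lemma exists_dir {e : E} {u v : V} (h : ends e = s(u, v)) :
    ∃ b : Bool, tl o₁ o₂ b e = u ∧ hdd o₁ o₂ b e = v := by
  rw [ho e, Sym2.eq_iff] at h
  rcases h with ⟨h1, h2⟩ | ⟨h1, h2⟩
  · exact ⟨true, by simp [tl, h1], by simp [hdd, h2]⟩
  · exact ⟨false, by simp [tl, h2], by simp [hdd, h1]⟩

omit ho hne in
lemma exc_update (f : E → Option Bool) (e : E) (val : Option Bool) (w : V) :
    exc o₁ o₂ (Function.update f e val) w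
      = exc o₁ o₂ f w + contrib o₁ o₂ val e w - contrib o₁ o₂ (f e) e w := by
  unfold exc
  rw [← Finset.sum_erase_add _ _ (Finset.mem_univ e),
    ← Finset.sum_erase_add _ (fun e' => contrib o₁ o₂ (f e') e' w) (Finset.mem_univ e)]
  rw [show (Function.update f e val e) = val from Function.update_self e val f]
  have hc : ∀ e' ∈ Finset.univ.erase e,
      contrib o₁ o₂ (Function.update f e val e') e' w = contrib o₁ o₂ (f e') e' w := by
    intro e' he'
    rw [Function.update_of_ne (Finset.ne_of_mem_erase he')]
  rw [Finset.sum_congr rfl hc]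
  ring

omit ho hne in
lemma pos_exc_out {f : E → Option Bool} {v : V} (h : 1 ≤ exc o₁ o₂ f v) :
    ∃ e b, f e = some b ∧ tl o₁ o₂ b e = v := by
  by_contra hno
  push_neg at hno
  have : exc o₁ o₂ f v ≤ 0 := by
    apply Finset.sum_nonpos
    intro e _
    cases hfe : f e with
    | none => simp [contrib]
    | some b =>
      have := hno e b hfe
      simp only [contrib, if_neg this]
      split <;> omega
  omega

/-- residual walks -/
inductive RW (f : E → Option Bool) : V → V → List E → Prop
  | nil (v : V) : RW f v v []
  | unused {u v w : V} {e : E} {l : List E} :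
      f e = none → ends e = s(u, v) → RW f v w l → RW f u w (e :: l)
  | used {u v w : V} {e : E} {l : List E} (b : Bool) :
      f e = some b → hdd o₁ o₂ b e = u → tl o₁ o₂ b e = v → RW f v w l → RW f u w (e :: l)

lemma RW_append {f : E → Option Bool} :
    ∀ {a b c : V} {l1 l2 : List E}, RW o₁ o₂ (ends := ends) f a b l1 →
      RW o₁ o₂ (ends := ends) f b c l2 → RW o₁ o₂ (ends := ends) f a c (l1 ++ l2) := by
  intro a b c l1 l2 h1
  induction h1 with
  | nil v => intro h; simpa using h
  | unused h1 h2 _ ih => intro h; exact RW.unused h1 h2 (ih h)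
  | used b h1 h2 h3 _ ih => intro h; exact RW.used b h1 h2 h3 (ih h)

lemma RW_split {f : E → Option Bool} :
    ∀ {l1 : List E} {a c : V} {l2 : List E}, RW o₁ o₂ (ends := ends) f a c (l1 ++ l2) →
      ∃ m, RW o₁ o₂ (ends := ends) f a m l1 ∧ RW o₁ o₂ (ends := ends) f m c l2 := by
  intro l1
  induction l1 with
  | nil => intro a c l2 h; exact ⟨a, RW.nil a, h⟩
  | cons e t ih =>
    intro a c l2 h
    cases h with
    | unused h1 h2 h3 =>
      obtain ⟨m, hm1, hm2⟩ := ih h3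
      exact ⟨m, RW.unused h1 h2 hm1, hm2⟩
    | used b h1 h2 h3 h4 =>
      obtain ⟨m, hm1, hm2⟩ := ih h4
      exact ⟨m, RW.used b h1 h2 h3 hm1, hm2⟩

lemma RW_congr {f g : E → Option Bool} :
    ∀ {a b : V} {l : List E}, (∀ e ∈ l, g e = f e) → RW o₁ o₂ (ends := ends) f a b l →
      RW o₁ o₂ (ends := ends) g a b l := by
  intro a b l hfg h
  induction h with
  | nil v => exact RW.nil v
  | unused h1 h2 _ ih =>
    exact RW.unused (by rw [hfg _ (List.mem_cons_self)]; exact h1) h2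
      (ih fun e he => hfg e (List.mem_cons_of_mem _ he))
  | used b h1 h2 h3 _ ih =>
    exact RW.used b (by rw [hfg _ (List.mem_cons_self)]; exact h1) h2 h3
      (ih fun e he => hfg e (List.mem_cons_of_mem _ he))

lemma RW_step_ends {f : E → Option Bool} {u c : V} {e : E} {l : List E}
    (h : RW o₁ o₂ (ends := ends) f u c (e :: l)) :
    ∃ v, ((u = o₁ e ∧ v = o₂ e) ∨ (u = o₂ e ∧ v = o₁ e)) ∧
      RW o₁ o₂ (ends := ends) f v c l := by
  cases h with
  | unused h1 h2 h3 =>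
    rename_i v
    rw [ho e, Sym2.eq_iff] at h2
    rcases h2 with ⟨ha, hb⟩ | ⟨ha, hb⟩
    · exact ⟨v, Or.inl ⟨ha.symm, hb.symm⟩, h3⟩
    · exact ⟨v, Or.inr ⟨hb.symm, ha.symm⟩, h3⟩
  | used b h1 h2 h3 h4 =>
    rename_i v
    cases b with
    | true => exact ⟨v, Or.inr ⟨by simpa [hdd] using h2.symm, by simpa [tl] using h3.symm⟩, h4⟩
    | false => exact ⟨v, Or.inl ⟨by simpa [hdd] using h2.symm, by simpa [tl] using h3.symm⟩, h4⟩

lemma RW_dedup {f : E → Option Bool} :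
    ∀ {u y : V} {l : List E}, RW o₁ o₂ (ends := ends) f u y l →
      ∃ l', l'.Nodup ∧ (∀ e ∈ l', e ∈ l) ∧ RW o₁ o₂ (ends := ends) f u y l' := by
  intro u y l h
  induction h with
  | nil v => exact ⟨[], by simp, by simp, RW.nil v⟩
  | @unused u v w e l h1 h2 _ ih =>
    obtain ⟨l', hnd, hsub, hrw⟩ := ih
    by_cases hel : e ∈ l'
    · obtain ⟨m1, m2, rfl⟩ := List.append_of_mem hel
      obtain ⟨mid, hm1, hm2⟩ := RW_split o₁ o₂ ho hne hrw
      obtain ⟨mid', hcase2, hm3⟩ := RW_step_ends o₁ o₂ ho hne hm2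
      have hnd2 : (e :: m2).Nodup := (List.nodup_append.1 hnd).2.1
      have hsub2 : ∀ a ∈ e :: m2, a ∈ e :: l := by
        intro a ha
        rcases List.mem_cons.1 ha with rfl | ha
        · exact List.mem_cons_self
        · exact List.mem_cons_of_mem _ (hsub a (by simp [ha]))
      rw [ho e, Sym2.eq_iff] at h2
      have hucase : (u = o₁ e ∧ v = o₂ e) ∨ (u = o₂ e ∧ v = o₁ e) := by
        rcases h2 with ⟨ha, hb⟩ | ⟨ha, hb⟩
        · exact Or.inl ⟨ha.symm, hb.symm⟩
        · exact Or.inr ⟨hb.symm, ha.symm⟩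
      by_cases humid : u = mid
      · exact ⟨e :: m2, hnd2, hsub2, by rw [humid]; exact hm2⟩
      · have humid' : u = mid' := by
          rcases hucase with ⟨hu, _⟩ | ⟨hu, _⟩ <;> rcases hcase2 with ⟨hmid, hmid'⟩ | ⟨hmid, hmid'⟩ <;>
            first
              | (exfalso; exact humid (hu.trans hmid.symm))
              | exact hu.trans hmid'.symm
        refine ⟨m2, hnd2.of_cons, ?_, by rw [humid']; exact hm3⟩
        intro a ha
        exact List.mem_cons_of_mem _ (hsub a (by simp [ha]))
    · exact ⟨e :: l', by simp [hnd, hel], by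
        intro a ha
        rcases List.mem_cons.1 ha with rfl | ha
        · exact List.mem_cons_self
        · exact List.mem_cons_of_mem _ (hsub a ha), RW.unused h1 h2 hrw⟩
  | @used u v w e l b h1 h2 h3 _ ih =>
    obtain ⟨l', hnd, hsub, hrw⟩ := ih
    by_cases hel : e ∈ l'
    · obtain ⟨m1, m2, rfl⟩ := List.append_of_mem hel
      obtain ⟨mid, hm1, hm2⟩ := RW_split o₁ o₂ ho hne hrw
      obtain ⟨mid', hcase2, hm3⟩ := RW_step_ends o₁ o₂ ho hne hm2
      have hnd2 : (e :: m2).Nodup := (List.nodup_append.1 hnd).2.1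
      have hsub2 : ∀ a ∈ e :: m2, a ∈ e :: l := by
        intro a ha
        rcases List.mem_cons.1 ha with rfl | ha
        · exact List.mem_cons_self
        · exact List.mem_cons_of_mem _ (hsub a (by simp [ha]))
      have hucase : (u = o₁ e ∧ v = o₂ e) ∨ (u = o₂ e ∧ v = o₁ e) := by
        cases b with
        | true => exact Or.inr ⟨by simpa [hdd] using h2.symm, by simpa [tl] using h3.symm⟩
        | false => exact Or.inl ⟨by simpa [hdd] using h2.symm, by simpa [tl] using h3.symm⟩
      by_cases humid : u = mid
      · exact ⟨e :: m2, hnd2, hsub2, by rw [humid]; exact hm2⟩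
      · have humid' : u = mid' := by
          rcases hucase with ⟨hu, _⟩ | ⟨hu, _⟩ <;> rcases hcase2 with ⟨hmid, hmid'⟩ | ⟨hmid, hmid'⟩ <;>
            first
              | (exfalso; exact humid (hu.trans hmid.symm))
              | exact hu.trans hmid'.symm
        refine ⟨m2, hnd2.of_cons, ?_, by rw [humid']; exact hm3⟩
        intro a ha
        exact List.mem_cons_of_mem _ (hsub a (by simp [ha]))
    · exact ⟨e :: l', by simp [hnd, hel], by
        intro a ha
        rcases List.mem_cons.1 ha with rfl | ha
        · exact List.mem_cons_self
        · exact List.mem_cons_of_mem _ (hsub a ha), RW.used b h1 h2 h3 hrw⟩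

omit ho hne in
lemma contrib_some_eq (b : Bool) (e : E) (w : V) :
    contrib o₁ o₂ (some b) e w
      = (if w = tl o₁ o₂ b e then (1 : ℤ) else 0) - (if w = hdd o₁ o₂ b e then 1 else 0) := by
  simp only [contrib]
  congr 1 <;> simp [eq_comm]

lemma augment {y : V} :
    ∀ {l : List E}, l.Nodup → ∀ {f : E → Option Bool} {u : V},
      RW o₁ o₂ (ends := ends) f u y l →
      ∃ f' : E → Option Bool,
        ∀ w, exc o₁ o₂ f' w = exc o₁ o₂ f w + (if w = u then 1 else 0) - (if w = y then 1 else 0) := by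
  intro l
  induction l with
  | nil =>
    intro _ f u h
    cases h with
    | nil => exact ⟨f, fun w => by ring⟩
  | cons e t ih =>
    intro hnd f u h
    have het : e ∉ t := by simp [List.nodup_cons] at hnd; exact hnd.1
    have hndt : t.Nodup := by simp [List.nodup_cons] at hnd; exact hnd.2
    cases h with
    | @unused _ v _ _ _ h1 h2 h3 =>
      obtain ⟨b, hb1, hb2⟩ := exists_dir o₁ o₂ ho hne h2
      set f₁ := Function.update f e (some b) with hf₁
      have hexc1 : ∀ w, exc o₁ o₂ f₁ w
          = exc o₁ o₂ f w + (if w = u then 1 else 0) - (if w = v then 1 else 0) := by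
        intro w
        rw [hf₁, exc_update, h1, contrib_some_eq, hb1, hb2]
        simp only [contrib]
        ring
      have hrw1 : RW o₁ o₂ (ends := ends) f₁ v y t := by
        refine RW_congr o₁ o₂ ho hne ?_ h3
        intro e' he'
        exact Function.update_of_ne (fun h => het (by rw [← h]; exact he')) _ _
      obtain ⟨f₂, hexc2⟩ := ih hndt hrw1
      refine ⟨f₂, fun w => ?_⟩
      rw [hexc2 w, hexc1 w]
      ring
    | @used _ v _ _ _ b h1 h2 h3 h4 =>
      set f₁ := Function.update f e none with hf₁
      have hexc1 : ∀ w, exc o₁ o₂ f₁ w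
          = exc o₁ o₂ f w + (if w = u then 1 else 0) - (if w = v then 1 else 0) := by
        intro w
        rw [hf₁, exc_update, h1, contrib_some_eq, h2, h3]
        simp only [contrib]
        ring
      have hrw1 : RW o₁ o₂ (ends := ends) f₁ v y t := by
        refine RW_congr o₁ o₂ ho hne ?_ h4
        intro e' he'
        exact Function.update_of_ne (fun h => het (by rw [← h]; exact he')) _ _
      obtain ⟨f₂, hexc2⟩ := ih hndt hrw1
      refine ⟨f₂, fun w => ?_⟩
      rw [hexc2 w, hexc1 w]
      ring

omit ho hne in
/-- residual reachability -/
def ReachF (f : E → Option Bool) (x : V) : Set V :=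
  {w | ∃ l, RW o₁ o₂ (ends := ends) f x w l}

lemma reachF_unused {f : E → Option Bool} {x w z : V} {e : E}
    (hw : w ∈ ReachF o₁ o₂ (ends := ends) f x) (hf : f e = none) (hends : ends e = s(w, z)) :
    z ∈ ReachF o₁ o₂ (ends := ends) f x := by
  obtain ⟨l, hl⟩ := hw
  exact ⟨l ++ [e], RW_append o₁ o₂ ho hne hl (RW.unused hf hends (RW.nil z))⟩

lemma reachF_used {f : E → Option Bool} {x w : V} {e : E} {b : Bool}
    (hw : w ∈ ReachF o₁ o₂ (ends := ends) f x) (hf : f e = some b)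
    (hh : hdd o₁ o₂ b e = w) :
    tl o₁ o₂ b e ∈ ReachF o₁ o₂ (ends := ends) f x := by
  obtain ⟨l, hl⟩ := hw
  exact ⟨l ++ [e], RW_append o₁ o₂ ho hne hl (RW.used b hf hh rfl (RW.nil _))⟩

variable [Fintype V]

lemma flow_cut {f : E → Option Bool} {x y : V} (hxy : x ≠ y)
    (hcons : ∀ w, w ≠ x → w ≠ y → exc o₁ o₂ f w = 0)
    (hy : y ∉ ReachF o₁ o₂ (ends := ends) f x) :
    exc o₁ o₂ f x = ((bd ends (ReachF o₁ o₂ (ends := ends) f x)).ncard : ℤ) := by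
  classical
  set C := ReachF o₁ o₂ (ends := ends) f x with hC
  set F := (Set.toFinite C).toFinset with hF
  have hmemF : ∀ w, w ∈ F ↔ w ∈ C := fun w => Set.Finite.mem_toFinset _
  have hxC : x ∈ C := ⟨[], RW.nil x⟩
  have hsum1 : ∑ w ∈ F, exc o₁ o₂ f w = exc o₁ o₂ f x := by
    refine Finset.sum_eq_single_of_mem x ((hmemF x).2 hxC) ?_
    intro w hw hwx
    exact hcons w hwx (fun h => hy (h ▸ (hmemF w).1 hw))
  have hsum2 : ∑ w ∈ F, exc o₁ o₂ f w = ∑ e : E, (if e ∈ bd ends C then (1 : ℤ) else 0) := by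
    unfold exc
    rw [Finset.sum_comm]
    refine Finset.sum_congr rfl ?_
    intro e _
    cases hfe : f e with
    | none =>
      have hebd : e ∉ bd ends C := by
        rintro ⟨u, v, huv, hu, hv⟩
        exact hv (reachF_unused o₁ o₂ ho hne hu hfe huv)
      simp [contrib, hebd]
    | some b =>
      have hconts : ∀ w, contrib o₁ o₂ (some b) e w
          = (if w = tl o₁ o₂ b e then (1 : ℤ) else 0) - (if w = hdd o₁ o₂ b e then 1 else 0) :=
        fun w => contrib_some_eq o₁ o₂ b e w
      rw [Finset.sum_congr rfl (fun w _ => hconts w), Finset.sum_sub_distrib]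
      rw [Finset.sum_ite_eq' F (tl o₁ o₂ b e) (fun _ => (1 : ℤ)),
        Finset.sum_ite_eq' F (hdd o₁ o₂ b e) (fun _ => (1 : ℤ))]
      by_cases ht : tl o₁ o₂ b e ∈ C <;> by_cases hh : hdd o₁ o₂ b e ∈ C
      · have hebd : e ∉ bd ends C := by
          rintro ⟨u, v, huv, hu, hv⟩
          rw [ends_tl_hd o₁ o₂ ho hne b e, Sym2.eq_iff] at huv
          rcases huv with ⟨h1, h2⟩ | ⟨h1, h2⟩
          · exact hv (by rw [← h2]; exact hh)
          · exact hv (by rw [← h1]; exact ht)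
        simp [hmemF, ht, hh, hebd]
      · have hebd : e ∈ bd ends C := ⟨_, _, ends_tl_hd o₁ o₂ ho hne b e, ht, hh⟩
        simp [hmemF, ht, hh, hebd]
      · exact absurd (reachF_used o₁ o₂ ho hne hh hfe rfl) ht
      · have hebd : e ∉ bd ends C := by
          rintro ⟨u, v, huv, hu, hv⟩
          rw [ends_tl_hd o₁ o₂ ho hne b e, Sym2.eq_iff] at huv
          rcases huv with ⟨h1, h2⟩ | ⟨h1, h2⟩
          · exact ht (by rw [h1]; exact hu)
          · exact hh (by rw [h2]; exact hu)
        simp [hmemF, ht, hh, hebd]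
  have hn : ((bd ends C).ncard : ℤ) = ∑ e : E, (if e ∈ bd ends C then (1 : ℤ) else 0) := by
    rw [ncard_eq_sum (bd ends C), Nat.cast_sum]
    apply Finset.sum_congr rfl
    intro e _
    split <;> simp
  rw [← hsum1, hsum2, hn]

lemma flow_exists {x y : V} (hxy : x ≠ y) :
    ∀ p : ℕ, (∀ C : Set V, x ∈ C → y ∉ C → p ≤ (bd ends C).ncard) →
      ∃ f : E → Option Bool,
        (∀ w, w ≠ x → w ≠ y → exc o₁ o₂ f w = 0) ∧ exc o₁ o₂ f x = p := by
  intro p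
  induction p with
  | zero => exact fun _ => ⟨fun _ => none, fun w _ _ => by simp [exc, contrib], by simp [exc, contrib]⟩
  | succ p IH =>
    intro Hcut
    obtain ⟨f, hcons, hval⟩ := IH (fun C hx hy => le_trans (Nat.le_succ p) (Hcut C hx hy))
    by_cases hyR : y ∈ ReachF o₁ o₂ (ends := ends) f x
    · obtain ⟨l, hl⟩ := hyR
      obtain ⟨l', hnd', _, hrw'⟩ := RW_dedup o₁ o₂ ho hne hl
      obtain ⟨f', haug⟩ := augment o₁ o₂ ho hne hnd' hrw'
      refine ⟨f', fun w hwx hwy => ?_, ?_⟩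
      · rw [haug w]
        simp [hwx, hwy, hcons w hwx hwy]
      · rw [haug x, hval]
        simp [hxy]
    · exfalso
      have := flow_cut o₁ o₂ ho hne hxy hcons hyR
      have h2 := Hcut _ (⟨[], RW.nil x⟩ : x ∈ ReachF o₁ o₂ (ends := ends) f x) hyR
      rw [hval] at this
      have : (p : ℤ) = ((bd ends (ReachF o₁ o₂ (ends := ends) f x)).ncard : ℤ) := this
      omega

lemma peel {y : V} :
    ∀ (n : ℕ) (f : E → Option Bool) (v : V),
      (Finset.univ.filter (fun e => f e ≠ none)).card = n → v ≠ y →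
      (∀ w, w ≠ y → 0 ≤ exc o₁ o₂ f w) → 1 ≤ exc o₁ o₂ f v →
      ∃ (l : List E) (f₂ : E → Option Bool), IsWalk ends v y l ∧ l.Nodup ∧
        (∀ e ∈ l, f e ≠ none) ∧ (∀ e ∈ l, f₂ e = none) ∧ (∀ e, e ∉ l → f₂ e = f e) ∧
        (∀ w, w ≠ y → exc o₁ o₂ f₂ w = exc o₁ o₂ f w - (if w = v then 1 else 0)) := by
  intro n
  induction n using Nat.strong_induction_on with
  | _ n IHn =>
  intro f v hcard hvy hpos hexcv
  obtain ⟨e, b, hfe, htl⟩ := pos_exc_out o₁ o₂ hexcv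
  set w := hdd o₁ o₂ b e with hw
  have hvw : v ≠ w := htl ▸ tl_ne_hd o₁ o₂ ho hne b e
  have hends : ends e = s(v, w) := htl ▸ ends_tl_hd o₁ o₂ ho hne b e
  set f₁ := Function.update f e none with hf₁
  have hexc1 : ∀ w', exc o₁ o₂ f₁ w'
      = exc o₁ o₂ f w' - (if w' = v then 1 else 0) + (if w' = w then 1 else 0) := by
    intro w'
    rw [hf₁, exc_update, hfe, contrib_some_eq, htl, ← hw]
    simp [contrib]
    ring
  by_cases hwy : w = y
  · refine ⟨[e], f₁, ?_, by simp, ?_, ?_, ?_, ?_⟩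
    · rw [← hwy]; exact IsWalk.cons hends (IsWalk.nil w)
    · intro e' he'; simp at he'; subst he'; simp [hfe]
    · intro e' he'; simp at he'; subst he'; simp [hf₁]
    · intro e' he'; simp at he'; exact Function.update_of_ne he' _ _
    · intro w' hw'y
      rw [hexc1 w']
      have : w' ≠ w := fun h => hw'y (h.trans hwy)
      simp [this]
  · have hcard1 : (Finset.univ.filter (fun e' => f₁ e' ≠ none)).card < n := by
      rw [← hcard]
      apply Finset.card_lt_card
      constructor
      · intro e' he'
        simp only [Finset.mem_filter, Finset.mem_univ, true_and] at he' ⊢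
        intro h
        apply he'
        rcases eq_or_ne e' e with rfl | hne'
        · simp [hf₁]
        · rw [hf₁, Function.update_of_ne hne', h]
      · intro hsub
        have he : e ∈ Finset.univ.filter (fun e' => f e' ≠ none) := by
          simp [hfe]
        have := hsub he
        simp [hf₁] at this
    have hpos1 : ∀ w', w' ≠ y → 0 ≤ exc o₁ o₂ f₁ w' := by
      intro w' hw'y
      rw [hexc1 w']
      have h0 := hpos w' hw'y
      have h1 : w' = v → 1 ≤ exc o₁ o₂ f w' := fun h => by rw [h]; exact hexcv
      split_ifs with hA hB hB
      · omega
      · have := h1 hA; omega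
      · omega
      · omega
    have hexcw1 : 1 ≤ exc o₁ o₂ f₁ w := by
      rw [hexc1 w]
      have hwv' : ¬ (w = v) := fun h => hvw h.symm
      have h0 := hpos w hwy
      simp [hwv']
      omega
    obtain ⟨l', f₂, hwalk', hnd', hused', hzero', hoff', hexc'⟩ :=
      IHn _ hcard1 f₁ w rfl hwy hpos1 hexcw1
    have hel' : e ∉ l' := by
      intro hel
      have := hused' e hel
      simp [hf₁] at this
    refine ⟨e :: l', f₂, IsWalk.cons hends hwalk', by simp [hnd', hel'], ?_, ?_, ?_, ?_⟩
    · intro e' he'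
      rcases List.mem_cons.1 he' with rfl | he'
      · simp [hfe]
      · have h1 := hused' e' he'
        intro h
        apply h1
        rcases eq_or_ne e' e with rfl | hne'
        · simp [hf₁]
        · rw [hf₁, Function.update_of_ne hne', h]
    · intro e' he'
      rcases List.mem_cons.1 he' with rfl | he'
      · rw [hoff' e' hel', hf₁]; simp
      · exact hzero' e' he'
    · intro e' he'
      have h1 : e' ∉ l' := fun h => he' (List.mem_cons_of_mem _ h)
      have h2 : e' ≠ e := fun h => he' (h ▸ List.mem_cons_self)
      rw [hoff' e' h1, hf₁, Function.update_of_ne h2]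
    · intro w' hw'y
      rw [hexc' w' hw'y, hexc1 w']
      rcases eq_or_ne w' w with rfl | hww'
      · simp [hvw.symm]
      · simp [hww']

lemma many {x y : V} (hxy : x ≠ y) :
    ∀ (p : ℕ) (f : E → Option Bool),
      (∀ w, w ≠ y → 0 ≤ exc o₁ o₂ f w) → (p : ℤ) ≤ exc o₁ o₂ f x →
      ∃ L : List (List E), L.length = p ∧
        (∀ l ∈ L, IsWalk ends x y l ∧ l.Nodup ∧ ∀ e ∈ l, f e ≠ none) ∧
        List.Pairwise (fun l1 l2 => ∀ a ∈ l1, a ∉ l2) L := by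
  intro p
  induction p with
  | zero => exact fun f _ _ => ⟨[], rfl, by simp, by simp⟩
  | succ p IH =>
    intro f hpos hval
    obtain ⟨l, f₂, hwalk, hnd, hused, hzero, hoff, hexc⟩ :=
      peel o₁ o₂ ho hne _ f x rfl hxy hpos (by push_cast at hval; omega)
    obtain ⟨L', hlen', hprops', hpw'⟩ := IH f₂ (fun w hwy => by
        rw [hexc w hwy]
        rcases eq_or_ne w x with rfl | hwx
        · simp; push_cast at hval; omega
        · simp [hwx]; exact hpos w hwy)
      (by rw [hexc x hxy]; simp; push_cast at hval ⊢; omega)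
    have hL'f : ∀ l' ∈ L', ∀ e ∈ l', f e ≠ none := by
      intro l' hl' e he
      have h2 := (hprops' l' hl').2.2 e he
      have h3 : e ∉ l := fun h => h2 (hzero e h)
      rw [← hoff e h3]
      exact h2
    refine ⟨l :: L', by simp [hlen'], ?_, ?_⟩
    · intro l' hl'
      rcases List.mem_cons.1 hl' with rfl | hl'
      · exact ⟨hwalk, hnd, hused⟩
      · exact ⟨(hprops' l' hl').1, (hprops' l' hl').2.1, hL'f l' hl'⟩
    · refine List.Pairwise.cons ?_ hpw'
      intro l' hl' a ha hal'
      exact (hprops' l' hl').2.2 a hal' (hzero a ha)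

end Flow

section Menger
variable [Finite V] [Finite E]

lemma menger (ends : E → Sym2 V) (hloopless : ∀ e, ¬ (ends e).IsDiag)
    {k : ℕ} {x y : V} (hxy : x ≠ y)
    (hsep : ∀ A : Set E, A.ncard ≤ k → ¬ EdgeSep ends ⊤ x {y} A) :
    ∃ L : List (List E), L.length = k + 1 ∧ (∀ l ∈ L, IsWalk ends x y l ∧ l.Nodup) ∧
      List.Pairwise (fun l1 l2 => ∀ a ∈ l1, a ∉ l2) L := by
  classical
  letI := Fintype.ofFinite E
  letI := Fintype.ofFinite V
  choose o₁ o₂ ho using fun e => exists_ends ends e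
  have hne : ∀ e, o₁ e ≠ o₂ e := by
    intro e h
    apply hloopless e
    rw [ho e, h]
    exact Sym2.mk_isDiag_iff.2 rfl
  have Hcut : ∀ C : Set V, x ∈ C → y ∉ C → k + 1 ≤ (bd ends C).ncard := by
    intro C hxC hyC
    by_contra h
    push_neg at h
    refine hsep (bd ends C) (by omega) ?_
    intro y' hy' l hl _
    rcases hy'
    exact walk_crosses hl hxC hyC
  obtain ⟨f, hcons, hval⟩ := flow_exists o₁ o₂ ho hne hxy (k + 1) Hcut
  obtain ⟨L, hlen, hprops, hpw⟩ := many o₁ o₂ ho hne hxy (k + 1) f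
    (fun w hwy => by
      rcases eq_or_ne w x with rfl | hwx
      · rw [hval]; positivity
      · rw [hcons w hwx hwy])
    (by rw [hval])
  exact ⟨L, hlen, fun l hl => ⟨(hprops l hl).1, (hprops l hl).2.1⟩, hpw⟩

lemma immersion_of_hi_connectivity (ends : E → Sym2 V) (hloopless : ∀ e, ¬ (ends e).IsDiag)
    {k : ℕ} {x y : V} (hxy : x ≠ y)
    (hsep : ∀ A : Set E, A.ncard ≤ k → ¬ EdgeSep ends ⊤ x {y} A) :
    Immersion (thetaEnds (k + 1)) ends := by
  obtain ⟨L, hlen, hprops, hpw⟩ := menger ends hloopless hxy hsep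
  have hinj : Function.Injective (![x, y]) := by
    intro a b hab
    fin_cases a <;> fin_cases b
    · rfl
    · exact absurd (by simpa using hab) hxy
    · exact absurd (by simpa using hab.symm) hxy
    · rfl
  refine ⟨⟨![x, y], hinj⟩, fun i => L.get (Fin.cast hlen.symm i), ?_, ?_⟩
  · intro e
    have hm : L.get (Fin.cast hlen.symm e) ∈ L := by
      exact List.get_mem L _
    refine ⟨0, 1, rfl, ?_, (hprops _ hm).2⟩
    simpa using (hprops _ hm).1
  · intro e f hef a ha haf
    have hpg := List.pairwise_iff_get.1 hpw
    rcases lt_or_gt_of_ne (fun h : (Fin.cast hlen.symm e) = (Fin.cast hlen.symm f) =>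
      hef (Fin.cast_injective hlen.symm h)) with h | h
    · exact hpg _ _ h a ha haf
    · exact hpg _ _ h a haf ha

end Menger

end P17

theorem theta_free_edgeAdmissibility {V E : Type*} [Finite V] [Finite E]
    (ends : E → Sym2 V) (hloopless : ∀ e, ¬ (ends e).IsDiag) (k : ℕ) (hk : 1 ≤ k) :
    (¬ Immersion (thetaEnds (k + 1)) ends → edgeDeg ends ⊤ ≤ 2 * k - 1) ∧
    ((∀ x y : V, x ≠ y → ∃ A : Set E, A.ncard ≤ k ∧ EdgeSep ends ⊤ x {y} A) →
      ∀ S : Set V, S.Nonempty → ¬ IsHideout ends ⊤ (2 * k) S) := by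
  constructor
  · intro hImm
    have Hpair : ∀ x y : V, x ≠ y → ∃ A : Set E, A.ncard ≤ k ∧ EdgeSep ends ⊤ x {y} A := by
      intro x y hxy
      by_contra h
      push_neg at h
      exact hImm (P17.immersion_of_hi_connectivity ends hloopless hxy h)
    obtain ⟨n, L, hL⟩ := P17.layout ends Hpair
    apply Nat.sInf_le
    refine ⟨n, L, fun i => ?_⟩
    obtain ⟨A, h1, h2⟩ := hL i
    exact ⟨A, le_trans h1 (by omega), h2⟩
  · intro Hpair S hS
    exact P17.part2 ends hk Hpair S hS
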